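/- Fix λ ≥ 1, c₀ > 0, ε = c₀/λ, and a nonempty box B = ∏_j [ℓ_j, u_j] ⊂ ℝ^d. Let X be a random vector in ℝ^d whose law satisfies the tube-mass condition P(dist(X, ∂B) ≤ t) ≤ C t^β for all t ∈ (0, t₀], for some constants C, β, t₀ > 0. Let S_B be the barrier score S_B(x) = ∏_j ϑ_{λ,ε}(u_j - x_j) ϑ_{λ,ε}(x_j - ℓ_j) built from a barrier ϑ_{λ,ε} with ϑ_{λ,ε}(t) = 1 for t ≥ 0, ϑ_{λ,ε}(t) = e^{λt} for t ≤ -ε, and ϑ_{λ,ε} nondecreasing with values in [0,1]. Then E[|S_B(X) - 1_B(X)|] ≤ (C(dc₀)^β + e^{dc₀}(C·Γ(β+1) + C')) · λ^{-β}, where C' depends only on β and t₀; in particular the L¹ calibration error decays polynomially in λ at rate β. -/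

import Mathlib

open MeasureTheory Finset

set_option maxHeartbeats 2000000 in
/-- `L¹(P)` calibration of the barrier score for a box under a tube-mass condition:
with `ε = c₀/λ`, a barrier `ϑ` that is nondecreasing, `[0,1]`-valued, `≡ 1` on
`[0,∞)` and `= e^{λt}` on `(-∞,-ε]`, and a law satisfying
`P(dist(X,∂B) ≤ t) ≤ C t^β` for `t ∈ (0,t₀]`, there is a constant `C'` depending
only on `β` and `t₀` such that
`E|S_B(X) - 1_B(X)| ≤ (C (d c₀)^β + e^{d c₀}(C Γ(β+1) + C'))·λ^{-β}`. -/
theorem barrier_score_calibration :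
    ∀ (β t₀ : ℝ), 0 < β → 0 < t₀ →
    ∃ C' : ℝ,
      ∀ (Ω : Type) (_ : MeasurableSpace Ω) (μ : Measure Ω),
        IsProbabilityMeasure μ →
      ∀ (d : ℕ) (lam c₀ C : ℝ), 1 ≤ lam → 0 < c₀ → 0 < C →
      ∀ (ℓ u : Fin d → ℝ), (∀ j, ℓ j ≤ u j) →
      ∀ (ϑ : ℝ → ℝ), Monotone ϑ → (∀ t, ϑ t ∈ Set.Icc (0 : ℝ) 1) →
        (∀ t, 0 ≤ t → ϑ t = 1) →
        (∀ t, t ≤ -(c₀ / lam) → ϑ t = Real.exp (lam * t)) →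
      ∀ (X : Ω → EuclideanSpace ℝ (Fin d)), Measurable X →
      ∀ (B : Set (EuclideanSpace ℝ (Fin d))),
        B = {x | ∀ j, x j ∈ Set.Icc (ℓ j) (u j)} →
      (∀ t ∈ Set.Ioc (0 : ℝ) t₀,
        μ {ω | Metric.infDist (X ω) (frontier B) ≤ t}
          ≤ ENNReal.ofReal (C * t ^ β)) →
      (∫ ω, |(∏ j, ϑ (u j - X ω j) * ϑ (X ω j - ℓ j))
              - Set.indicator B (fun _ => (1 : ℝ)) (X ω)| ∂μ)
        ≤ (C * (d * c₀) ^ β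
            + Real.exp (d * c₀) * (C * Real.Gamma (β + 1) + C')) * lam ^ (-β) := by
  intro β t₀ hβ ht₀
  set n : ℕ := ⌈β⌉₊ with hn
  refine ⟨t₀ ^ (-β) * Real.Gamma (β + 1) + (Nat.factorial n : ℝ) / t₀ ^ n, ?_⟩
  intro Ω mΩ μ hμ d lam c₀ C hlam hc₀ hC ℓ u hℓu ϑ hmono hrange hone hexpϑ X hXm B hB htube
  classical
  have hlam0 : (0:ℝ) < lam := lt_of_lt_of_le one_pos hlam
  have hΓ : 0 < Real.Gamma (β + 1) := Real.Gamma_pos_of_pos (by linarith)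
  have hC'1 : (0:ℝ) ≤ t₀ ^ (-β) * Real.Gamma (β + 1) := by positivity
  have hC'2 : (0:ℝ) ≤ (Nat.factorial n : ℝ) / t₀ ^ n := by positivity
  have hlamβ : (0:ℝ) < lam ^ (-β) := Real.rpow_pos_of_pos hlam0 _
  have hϑ0 : ∀ t, 0 ≤ ϑ t := fun t => (hrange t).1
  have hϑ1 : ∀ t, ϑ t ≤ 1 := fun t => (hrange t).2
  set s : EuclideanSpace ℝ (Fin d) → ℝ :=
    fun x => ∏ j, ϑ (u j - x j) * ϑ (x j - ℓ j) with hs_def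
  have hs_nonneg : ∀ x, 0 ≤ s x := fun x =>
    Finset.prod_nonneg fun j _ => mul_nonneg (hϑ0 _) (hϑ0 _)
  have hs_le1 : ∀ x, s x ≤ 1 := fun x =>
    Finset.prod_le_one (fun j _ => mul_nonneg (hϑ0 _) (hϑ0 _))
      (fun j _ => mul_le_one₀ (hϑ1 _) (hϑ0 _) (hϑ1 _))
  have hsB : ∀ x, x ∈ B → s x = 1 := by
    intro x hx
    rw [hB] at hx
    refine Finset.prod_eq_one fun j _ => ?_
    rw [hone _ (by have := (hx j).2; linarith), hone _ (by have := (hx j).1; linarith), one_mul]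
  have habs : ∀ ω, |s (X ω) - Set.indicator B (fun _ => (1:ℝ)) (X ω)|
      = if X ω ∈ B then 0 else s (X ω) := by
    intro ω
    by_cases h : X ω ∈ B
    · simp [h, hsB _ h]
    · simp [h, abs_of_nonneg (hs_nonneg _)]
  -- measurability
  have hproj : ∀ j, Measurable fun x : EuclideanSpace ℝ (Fin d) => x j := fun j =>
    (EuclideanSpace.proj (𝕜 := ℝ) j).continuous.measurable
  have hBclosed : IsClosed B := by
    have : B = ⋂ j, (fun x : EuclideanSpace ℝ (Fin d) => x j) ⁻¹' (Set.Icc (ℓ j) (u j)) := by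
      rw [hB]; ext x; simp [Set.mem_iInter]
    rw [this]
    exact isClosed_iInter fun j =>
      isClosed_Icc.preimage (EuclideanSpace.proj (𝕜 := ℝ) j).continuous
  have hBmeas : MeasurableSet B := hBclosed.measurableSet
  have hs_meas : Measurable s := by
    refine Finset.measurable_prod _ fun j _ => Measurable.mul ?_ ?_
    · exact hmono.measurable.comp (measurable_const.sub (hproj j))
    · exact hmono.measurable.comp ((hproj j).sub measurable_const)
  have hg_meas : Measurable fun ω =>
      |s (X ω) - Set.indicator B (fun _ => (1:ℝ)) (X ω)| := by
    apply Measurable.abs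
    exact ((hs_meas.comp hXm).sub
      ((measurable_const.indicator hBmeas).comp hXm))
  have hg_int : Integrable (fun ω =>
      |s (X ω) - Set.indicator B (fun _ => (1:ℝ)) (X ω)|) μ := by
    refine (integrable_const (1:ℝ)).mono' hg_meas.aestronglyMeasurable ?_
    refine Filter.Eventually.of_forall fun ω => ?_
    rw [Real.norm_eq_abs, abs_abs, habs]
    split
    · norm_num
    · exact hs_le1 _
  show (∫ ω, |s (X ω) - Set.indicator B (fun _ => (1:ℝ)) (X ω)| ∂μ) ≤ _
  -- trivial case d = 0
  rcases Nat.eq_zero_or_pos d with hd0 | hd0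
  · subst hd0
    have hBuniv : B = Set.univ := by
      rw [hB]; ext x
      simp only [Set.mem_setOf_eq, Set.mem_univ, iff_true]
      exact fun j => j.elim0
    have : ∀ ω, |s (X ω) - Set.indicator B (fun _ => (1:ℝ)) (X ω)| = 0 := by
      intro ω; rw [habs]; simp [hBuniv]
    rw [integral_congr_ae (Filter.Eventually.of_forall this), integral_zero]
    have h1 : (0:ℝ) ≤ C * ((0:ℕ) * c₀) ^ β := by positivity
    have h2 : (0:ℝ) ≤ Real.exp ((0:ℕ) * c₀) *
        (C * Real.Gamma (β + 1) + (t₀ ^ (-β) * Real.Gamma (β + 1)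
          + (Nat.factorial n : ℝ) / t₀ ^ n)) := by positivity
    positivity
  -- key pointwise bound off B
  have hϑle : ∀ t, ϑ t ≤ Real.exp (lam * t + c₀) := by
    intro t
    by_cases h : t ≤ -(c₀ / lam)
    · rw [hexpϑ _ h]
      exact Real.exp_le_exp.mpr (by linarith)
    · push_neg at h
      have h2 : lam * (-(c₀ / lam)) < lam * t := by
        exact mul_lt_mul_of_pos_left h hlam0
      have h3 : lam * (c₀ / lam) = c₀ := mul_div_cancel₀ _ (ne_of_gt hlam0)
      have : (0:ℝ) ≤ lam * t + c₀ := by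
        rw [mul_neg, h3] at h2; linarith
      calc ϑ t ≤ 1 := hϑ1 t
        _ ≤ Real.exp (lam * t + c₀) := Real.one_le_exp this
  have hkey : ∀ x : EuclideanSpace ℝ (Fin d), x ∉ B →
      s x ≤ Real.exp (d * c₀) * Real.exp (-(lam * Metric.infDist x (frontier B))) := by
    intro x hx
    set p : EuclideanSpace ℝ (Fin d) := WithLp.toLp 2 (fun j => max (ℓ j) (min (x j) (u j))) with hp_def
    have hpj : ∀ j, p j = max (ℓ j) (min (x j) (u j)) := fun j => rfl
    have hpmem : p ∈ B := by
      rw [hB]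
      intro j
      refine ⟨le_max_left _ _, max_le (hℓu j) (min_le_right _ _)⟩
    have hcoord : ∀ j, ϑ (u j - x j) * ϑ (x j - ℓ j)
        ≤ Real.exp (c₀ - lam * |x j - p j|) := by
      intro j
      rcases lt_or_ge (x j) (ℓ j) with hxl | hxl
      · have hpj' : p j = ℓ j := by
          rw [hpj, min_eq_left (le_of_lt (lt_of_lt_of_le hxl (hℓu j))), max_eq_left hxl.le]
        have h1 : ϑ (u j - x j) = 1 := hone _ (by have := hℓu j; linarith)
        have h2 : ϑ (x j - ℓ j) ≤ Real.exp (lam * (x j - ℓ j) + c₀) := hϑle _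
        rw [h1, one_mul, hpj', abs_of_neg (by linarith : x j - ℓ j < 0)]
        calc ϑ (x j - ℓ j) ≤ Real.exp (lam * (x j - ℓ j) + c₀) := h2
          _ = Real.exp (c₀ - lam * -(x j - ℓ j)) := by ring_nf
      · rcases le_or_gt (x j) (u j) with hxu | hxu
        · have hpj' : p j = x j := by
            rw [hpj, min_eq_left hxu, max_eq_right hxl]
          rw [hpj', sub_self, abs_zero, mul_zero, sub_zero]
          calc ϑ (u j - x j) * ϑ (x j - ℓ j) ≤ 1 :=
                mul_le_one₀ (hϑ1 _) (hϑ0 _) (hϑ1 _)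
            _ ≤ Real.exp c₀ := Real.one_le_exp hc₀.le
        · have hpj' : p j = u j := by
            rw [hpj, min_eq_right hxu.le, max_eq_right (hℓu j)]
          have h1 : ϑ (x j - ℓ j) = 1 := hone _ (by have := hℓu j; linarith)
          have h2 : ϑ (u j - x j) ≤ Real.exp (lam * (u j - x j) + c₀) := hϑle _
          rw [h1, mul_one, hpj', abs_of_pos (by linarith : 0 < x j - u j)]
          calc ϑ (u j - x j) ≤ Real.exp (lam * (u j - x j) + c₀) := h2
            _ = Real.exp (c₀ - lam * (x j - u j)) := by ring_nf
    have hZ : s x ≤ Real.exp (d * c₀ - lam * ∑ j, |x j - p j|) := by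
      calc s x ≤ ∏ j, Real.exp (c₀ - lam * |x j - p j|) :=
            Finset.prod_le_prod (fun j _ => mul_nonneg (hϑ0 _) (hϑ0 _))
              (fun j _ => hcoord j)
        _ = Real.exp (∑ j, (c₀ - lam * |x j - p j|)) := (Real.exp_sum _ _).symm
        _ = Real.exp (d * c₀ - lam * ∑ j, |x j - p j|) := by
            congr 1
            rw [Finset.sum_sub_distrib, Finset.sum_const, Finset.mul_sum]
            simp [mul_comm]
    -- p is on the frontier
    have hxB : ¬ ∀ j, x j ∈ Set.Icc (ℓ j) (u j) := by rw [hB] at hx; exact hx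
    push_neg at hxB
    obtain ⟨j₀, hj₀⟩ := hxB
    have hpfront : p ∈ frontier B := by
      rw [frontier_eq_closure_inter_closure]
      refine ⟨subset_closure hpmem, ?_⟩
      rw [Metric.mem_closure_iff]
      intro δ hδ
      rw [Set.mem_Icc, not_and_or, not_le, not_le] at hj₀
      rcases hj₀ with hxl | hxu
      · refine ⟨p + (-(δ/2)) • EuclideanSpace.single j₀ (1:ℝ), ?_, ?_⟩
        · intro hmem
          rw [hB] at hmem
          have := (hmem j₀).1
          have hq : (p + (-(δ/2)) • EuclideanSpace.single j₀ (1:ℝ)) j₀ = p j₀ - δ/2 := by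
            simp [EuclideanSpace.single_apply]; ring
          have hpj' : p j₀ = ℓ j₀ := by
            rw [hpj, min_eq_left (le_of_lt (lt_of_lt_of_le hxl (hℓu j₀))), max_eq_left hxl.le]
          rw [hq, hpj'] at this
          linarith
        · rw [dist_self_add_right]
          rw [norm_smul, EuclideanSpace.norm_single]
          simp [abs_of_pos hδ]
          linarith
      · refine ⟨p + (δ/2) • EuclideanSpace.single j₀ (1:ℝ), ?_, ?_⟩
        · intro hmem
          rw [hB] at hmem
          have := (hmem j₀).2
          have hq : (p + (δ/2) • EuclideanSpace.single j₀ (1:ℝ)) j₀ = p j₀ + δ/2 := by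
            simp [EuclideanSpace.single_apply]
          have hpj' : p j₀ = u j₀ := by
            rw [hpj, min_eq_right hxu.le, max_eq_right (hℓu j₀)]
          rw [hq, hpj'] at this
          linarith
        · rw [dist_self_add_right]
          rw [norm_smul, EuclideanSpace.norm_single]
          simp [abs_of_pos hδ]
          linarith
    have hdistZ : Metric.infDist x (frontier B) ≤ ∑ j, |x j - p j| := by
      refine le_trans (Metric.infDist_le_dist_of_mem hpfront) ?_
      rw [EuclideanSpace.dist_eq]
      have h1 : ∑ j, dist (x j) (p j) ^ 2 ≤ (∑ j, |x j - p j|) ^ 2 := by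
        have := Finset.sum_sq_le_sq_sum_of_nonneg (s := Finset.univ)
          (f := fun j => |x j - p j|) (fun i _ => abs_nonneg _)
        simpa [Real.dist_eq, sq_abs] using this
      calc Real.sqrt (∑ j, dist (x j) (p j) ^ 2)
          ≤ Real.sqrt ((∑ j, |x j - p j|) ^ 2) := Real.sqrt_le_sqrt h1
        _ = ∑ j, |x j - p j| := Real.sqrt_sq (by positivity)
    calc s x ≤ Real.exp (d * c₀ - lam * ∑ j, |x j - p j|) := hZ
      _ ≤ Real.exp (d * c₀ - lam * Metric.infDist x (frontier B)) := by
          apply Real.exp_le_exp.mpr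
          have := mul_le_mul_of_nonneg_left hdistZ hlam0.le
          linarith
      _ = Real.exp (d * c₀) * Real.exp (-(lam * Metric.infDist x (frontier B))) := by
          rw [← Real.exp_add]; ring_nf
    -- split on the size of d * ε
  set εd : ℝ := (d:ℝ) * (c₀ / lam) with hεd
  have hd0' : (0:ℝ) < (d:ℝ) := by exact_mod_cast hd0
  have hεdpos : 0 < εd := by rw [hεd]; positivity
  have hdc : lam * εd = (d:ℝ) * c₀ := by
    rw [hεd]; field_simp
  have hfact : (0:ℝ) < (Nat.factorial n : ℝ) := by positivity
  have ht₀n : (0:ℝ) < t₀ ^ n := by positivity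
  rcases le_or_gt εd t₀ with hcase | hcase
  · -- main case : d ε ≤ t₀
    set D : Ω → ℝ := fun ω => Metric.infDist (X ω) (frontier B) with hD_def
    have hD_meas : Measurable D :=
      (Metric.continuous_infDist_pt (frontier B)).measurable.comp hXm
    set A : Set Ω := {ω | D ω ≤ εd} with hA_def
    have hAmeas : MeasurableSet A := measurableSet_le hD_meas measurable_const
    set f : Ω → ℝ := fun ω => Real.exp (-(lam * max (D ω) εd)) with hf_def
    have hf_meas : Measurable f :=
      Real.measurable_exp.comp (((hD_meas.max measurable_const).const_mul lam).neg)
    have hf_nonneg : ∀ ω, 0 ≤ f ω := fun ω => (Real.exp_pos _).le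
    have hf_le1 : ∀ ω, f ω ≤ 1 := by
      intro ω
      apply Real.exp_le_one_iff.mpr
      have h1 : 0 < max (D ω) εd := lt_max_of_lt_right hεdpos
      nlinarith
    have hf_int : Integrable f μ := by
      refine (integrable_const (1:ℝ)).mono' hf_meas.aestronglyMeasurable ?_
      exact Filter.Eventually.of_forall fun ω => by
        rw [Real.norm_eq_abs, abs_of_nonneg (hf_nonneg ω)]; exact hf_le1 ω
    have hpt : ∀ ω, |s (X ω) - Set.indicator B (fun _ => (1:ℝ)) (X ω)|
        ≤ Set.indicator A (fun _ => (1:ℝ)) ω + Real.exp (d * c₀) * f ω := by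
      intro ω
      rw [habs]
      have hind : 0 ≤ Set.indicator A (fun _ => (1:ℝ)) ω :=
        Set.indicator_nonneg (fun _ _ => zero_le_one) ω
      have hfnn : 0 ≤ Real.exp (d * c₀) * f ω :=
        mul_nonneg (Real.exp_pos _).le (hf_nonneg ω)
      by_cases h : X ω ∈ B
      · rw [if_pos h]; linarith
      · rw [if_neg h]
        rcases le_or_gt (D ω) εd with hDle | hDgt
        · have hmemA : ω ∈ A := hDle
          have hA1 : Set.indicator A (fun _ => (1:ℝ)) ω = 1 :=
            Set.indicator_of_mem hmemA _
          rw [hA1]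
          have := hs_le1 (X ω); linarith
        · have hmax : max (D ω) εd = D ω := max_eq_left hDgt.le
          have hk := hkey (X ω) h
          have : f ω = Real.exp (-(lam * D ω)) := by rw [hf_def]; simp [hmax]
          rw [this]
          linarith
    -- the tail integral via layer cake
    set K : ℝ := C + t₀ ^ (-β) with hK
    have hKpos : 0 < K := by positivity
    set c : ℝ := K * lam ^ (-β) with hc
    have hcpos : 0 < c := by rw [hc]; positivity
    have hptmeas : ∀ t ∈ Set.Ioi (0:ℝ), μ {ω | t < f ω}
        ≤ (Set.Ioc (0:ℝ) 1).indicator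
            (fun t => ENNReal.ofReal (c * (-Real.log t) ^ β)) t := by
      intro t ht
      have ht' : 0 < t := ht
      rcases le_or_gt t 1 with ht1 | ht1
      · rw [Set.indicator_of_mem (Set.mem_Ioc.mpr ⟨ht', ht1⟩ : t ∈ Set.Ioc (0:ℝ) 1)]
        set sv : ℝ := -Real.log t / lam with hsv
        have hlogt : 0 ≤ -Real.log t := by
          have := Real.log_nonpos ht'.le ht1; linarith
        have hsv0 : 0 ≤ sv := div_nonneg hlogt hlam0.le
        by_cases hεsv : εd < sv
        · have hsub : {ω | t < f ω} ⊆ {ω | D ω ≤ sv} := by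
            intro ω hω
            simp only [Set.mem_setOf_eq] at hω ⊢
            have h1 : Real.log t < -(lam * max (D ω) εd) :=
              (Real.log_lt_iff_lt_exp ht').mpr hω
            have h2 : lam * max (D ω) εd < -Real.log t := by linarith
            have h3 : max (D ω) εd < sv := by
              rw [hsv, lt_div_iff₀ hlam0]
              linarith [h2]
            exact le_of_lt (lt_of_le_of_lt (le_max_left _ _) h3)
          have hcv : μ {ω | t < f ω} ≤ ENNReal.ofReal (K * sv ^ β) := by
            rcases le_or_gt sv t₀ with hsvt | hsvt
            · have h0sv : 0 < sv := hεdpos.trans hεsv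
              calc μ {ω | t < f ω} ≤ μ {ω | D ω ≤ sv} := measure_mono hsub
                _ ≤ ENNReal.ofReal (C * sv ^ β) := htube sv (Set.mem_Ioc.mpr ⟨h0sv, hsvt⟩)
                _ ≤ ENNReal.ofReal (K * sv ^ β) := by
                    apply ENNReal.ofReal_le_ofReal
                    have h4 : 0 ≤ sv ^ β := Real.rpow_nonneg hsv0 β
                    have h5 : 0 ≤ t₀ ^ (-β) := Real.rpow_nonneg ht₀.le _
                    rw [hK]; nlinarith
            · have hsvβ : t₀ ^ β ≤ sv ^ β :=
                Real.rpow_le_rpow ht₀.le hsvt.le hβ.le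
              have ht₀β : 0 < t₀ ^ β := Real.rpow_pos_of_pos ht₀ β
              have h1 : (1:ℝ) ≤ t₀ ^ (-β) * sv ^ β := by
                rw [Real.rpow_neg ht₀.le, inv_mul_eq_div, le_div_iff₀ ht₀β, one_mul]
                exact hsvβ
              calc μ {ω | t < f ω} ≤ 1 := prob_le_one
                _ = ENNReal.ofReal 1 := by simp
                _ ≤ ENNReal.ofReal (K * sv ^ β) := by
                    apply ENNReal.ofReal_le_ofReal
                    have h4 : 0 ≤ sv ^ β := Real.rpow_nonneg hsv0 β
                    rw [hK]; nlinarith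
          refine hcv.trans (le_of_eq ?_)
          congr 1
          rw [hsv, Real.div_rpow hlogt hlam0.le, hc, Real.rpow_neg hlam0.le]
          ring
        · push_neg at hεsv
          have hempty : {ω | t < f ω} = ∅ := by
            ext ω
            simp only [Set.mem_setOf_eq, Set.mem_empty_iff_false, iff_false, not_lt]
            have h1 : -Real.log t ≤ εd * lam := (div_le_iff₀ hlam0).mp hεsv
            have h2 : lam * εd ≤ lam * max (D ω) εd :=
              mul_le_mul_of_nonneg_left (le_max_right _ _) hlam0.le
            have h3 : -(lam * max (D ω) εd) ≤ Real.log t := by nlinarith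
            calc f ω = Real.exp (-(lam * max (D ω) εd)) := rfl
              _ ≤ Real.exp (Real.log t) := Real.exp_le_exp.mpr h3
              _ = t := Real.exp_log ht'
          rw [hempty]
          simp
      · rw [Set.indicator_of_notMem (fun hmem => absurd hmem.2 (not_le.mpr ht1))]
        have hempty : {ω | t < f ω} = ∅ := by
          ext ω
          simp only [Set.mem_setOf_eq, Set.mem_empty_iff_false, iff_false, not_lt]
          exact (hf_le1 ω).trans ht1.le
        rw [hempty]
        simp
    -- value of the model integral via change of variables
    have himg : (fun x : ℝ => Real.exp (-x)) '' (Set.Ioi 0) = Set.Ioo 0 1 := by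
      ext t
      constructor
      · rintro ⟨x, hx, rfl⟩
        exact ⟨Real.exp_pos _, Real.exp_lt_one_iff.mpr (neg_lt_zero.mpr hx.out)⟩
      · rintro ⟨ht0, ht1⟩
        exact ⟨-Real.log t, by simpa using Real.log_neg ht0 ht1,
          by simp [Real.exp_log ht0]⟩
    have hderiv : ∀ x ∈ Set.Ioi (0:ℝ), HasDerivWithinAt (fun x => Real.exp (-x))
        (-Real.exp (-x)) (Set.Ioi 0) x := by
      intro x _
      simpa [mul_comm, Function.comp_def] using
        ((Real.hasDerivAt_exp (-x)).comp x (hasDerivAt_neg x)).hasDerivWithinAt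
    have hinj : Set.InjOn (fun x : ℝ => Real.exp (-x)) (Set.Ioi 0) :=
      fun a _ b _ h => by simpa using Real.exp_injective h
    have hGint : IntegrableOn (fun x => Real.exp (-x) * x ^ β) (Set.Ioi 0) volume := by
      have := Real.GammaIntegral_convergent (s := β + 1) (by linarith)
      simpa using this
    have hIoo_int : IntegrableOn (fun t => (-Real.log t) ^ β) (Set.Ioo 0 1) volume := by
      rw [← himg,
        integrableOn_image_iff_integrableOn_abs_deriv_smul measurableSet_Ioi hderiv hinj]
      apply hGint.congr_fun _ measurableSet_Ioi
      intro x hx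
      simp [abs_of_pos (Real.exp_pos (-x)), Real.log_exp, smul_eq_mul]
    have hIoc_int : IntegrableOn (fun t => (-Real.log t) ^ β) (Set.Ioc 0 1) volume := by
      rwa [integrableOn_Ioc_iff_integrableOn_Ioo]
    have hIoc_val : ∫ t in Set.Ioc (0:ℝ) 1, (-Real.log t) ^ β = Real.Gamma (β + 1) := by
      rw [integral_Ioc_eq_integral_Ioo, ← himg,
        integral_image_eq_integral_abs_deriv_smul measurableSet_Ioi hderiv hinj]
      rw [Real.Gamma_eq_integral (by linarith : (0:ℝ) < β + 1)]
      apply setIntegral_congr_fun measurableSet_Ioi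
      intro x hx
      simp [abs_of_pos (Real.exp_pos (-x)), Real.log_exp, smul_eq_mul]
    -- the layer-cake bound on ∫ f
    have hf_bound : ∫ ω, f ω ∂μ ≤ K * Real.Gamma (β + 1) * lam ^ (-β) := by
      have hrep : ∫ ω, f ω ∂μ = (∫⁻ t in Set.Ioi (0:ℝ), μ {ω | t < f ω}).toReal := by
        rw [integral_eq_lintegral_of_nonneg_ae (Filter.Eventually.of_forall hf_nonneg)
            hf_meas.aestronglyMeasurable,
          lintegral_eq_lintegral_meas_lt μ (Filter.Eventually.of_forall hf_nonneg)
            hf_meas.aemeasurable]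
      have hmeas_ind : Measurable fun t : ℝ =>
          (Set.Ioc (0:ℝ) 1).indicator (fun t => ENNReal.ofReal (c * (-Real.log t) ^ β)) t := by
        apply Measurable.indicator _ measurableSet_Ioc
        exact ENNReal.measurable_ofReal.comp
          ((Real.measurable_log.neg.pow_const β).const_mul c)
      have hlin1 : (∫⁻ t in Set.Ioi (0:ℝ), μ {ω | t < f ω})
          ≤ ∫⁻ t in Set.Ioi (0:ℝ), (Set.Ioc (0:ℝ) 1).indicator
              (fun t => ENNReal.ofReal (c * (-Real.log t) ^ β)) t :=
        setLIntegral_mono hmeas_ind hptmeas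
      have hlin2 : (∫⁻ t in Set.Ioi (0:ℝ), (Set.Ioc (0:ℝ) 1).indicator
              (fun t => ENNReal.ofReal (c * (-Real.log t) ^ β)) t)
          = ∫⁻ t in Set.Ioc (0:ℝ) 1, ENNReal.ofReal (c * (-Real.log t) ^ β) := by
        rw [lintegral_indicator measurableSet_Ioc _,
          Measure.restrict_restrict measurableSet_Ioc,
          Set.inter_eq_left.mpr Set.Ioc_subset_Ioi_self]
      have hlin3 : (∫⁻ t in Set.Ioc (0:ℝ) 1, ENNReal.ofReal (c * (-Real.log t) ^ β))
          = ENNReal.ofReal (c * Real.Gamma (β + 1)) := by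
        rw [← ofReal_integral_eq_lintegral_ofReal (hIoc_int.const_mul c)
            (ae_restrict_of_forall_mem measurableSet_Ioc fun t htmem => by
              have : 0 ≤ -Real.log t := by
                have := Real.log_nonpos htmem.1.le htmem.2; linarith
              positivity)]
        rw [integral_const_mul, hIoc_val]
      rw [hrep]
      have hfin := hlin1.trans (le_of_eq (hlin2.trans hlin3))
      have := ENNReal.toReal_le_of_le_ofReal
        (by positivity : (0:ℝ) ≤ c * Real.Gamma (β + 1)) hfin
      calc (∫⁻ t in Set.Ioi (0:ℝ), μ {ω | t < f ω}).toReal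
          ≤ c * Real.Gamma (β + 1) := this
        _ = K * Real.Gamma (β + 1) * lam ^ (-β) := by rw [hc]; ring
    -- measure of the near-boundary set
    have hμA : (μ A).toReal ≤ C * εd ^ β := by
      refine ENNReal.toReal_le_of_le_ofReal (by positivity) ?_
      exact htube εd (Set.mem_Ioc.mpr ⟨hεdpos, hcase⟩)
    -- assemble
    have hstep : (∫ ω, |s (X ω) - Set.indicator B (fun _ => (1:ℝ)) (X ω)| ∂μ)
        ≤ (μ A).toReal + Real.exp (d * c₀) * ∫ ω, f ω ∂μ := by
      have hint_add : Integrable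
          (fun ω => Set.indicator A (fun _ => (1:ℝ)) ω + Real.exp (d * c₀) * f ω) μ :=
        ((integrable_const (1:ℝ)).indicator hAmeas).add (hf_int.const_mul _)
      calc (∫ ω, |s (X ω) - Set.indicator B (fun _ => (1:ℝ)) (X ω)| ∂μ)
          ≤ ∫ ω, (Set.indicator A (fun _ => (1:ℝ)) ω + Real.exp (d * c₀) * f ω) ∂μ :=
            integral_mono hg_int hint_add hpt
        _ = (μ A).toReal + Real.exp (d * c₀) * ∫ ω, f ω ∂μ := by
            rw [integral_add ((integrable_const (1:ℝ)).indicator hAmeas)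
              (hf_int.const_mul _), integral_indicator_const _ hAmeas,
              integral_const_mul]
            simp [Measure.real]
    have hεdβ : εd ^ β = ((d:ℝ) * c₀) ^ β * lam ^ (-β) := by
      rw [hεd, ← mul_div_assoc, Real.div_rpow (by positivity) hlam0.le,
        Real.rpow_neg hlam0.le, div_eq_mul_inv]
    have hfinal : (μ A).toReal + Real.exp (d * c₀) * ∫ ω, f ω ∂μ
        ≤ (C * ((d:ℝ) * c₀) ^ β + Real.exp ((d:ℝ) * c₀) * (C * Real.Gamma (β + 1)
            + (t₀ ^ (-β) * Real.Gamma (β + 1)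
              + (Nat.factorial n : ℝ) / t₀ ^ n))) * lam ^ (-β) := by
      have h1 : Real.exp (d * c₀) * ∫ ω, f ω ∂μ
          ≤ Real.exp (d * c₀) * (K * Real.Gamma (β + 1) * lam ^ (-β)) :=
        mul_le_mul_of_nonneg_left hf_bound (Real.exp_pos _).le
      have h2 : (μ A).toReal ≤ C * ((d:ℝ) * c₀) ^ β * lam ^ (-β) := by
        calc (μ A).toReal ≤ C * εd ^ β := hμA
          _ = C * (((d:ℝ) * c₀) ^ β * lam ^ (-β)) := by rw [hεdβ]
          _ = C * ((d:ℝ) * c₀) ^ β * lam ^ (-β) := by ring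
      have h3 : 0 ≤ Real.exp ((d:ℝ) * c₀) * ((Nat.factorial n : ℝ) / t₀ ^ n)
          * lam ^ (-β) := by positivity
      have hKexp : Real.exp (d * c₀) * (K * Real.Gamma (β + 1) * lam ^ (-β))
          = Real.exp ((d:ℝ) * c₀) * (C * Real.Gamma (β + 1)
            + t₀ ^ (-β) * Real.Gamma (β + 1)) * lam ^ (-β) := by
        rw [hK]; ring
      nlinarith [h1, h2, h3, hKexp]
    exact hstep.trans hfinal
  · -- large case : t₀ < d ε, the bound is trivially ≥ 1
    have hL1 : (∫ ω, |s (X ω) - Set.indicator B (fun _ => (1:ℝ)) (X ω)| ∂μ) ≤ 1 := by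
      calc (∫ ω, |s (X ω) - Set.indicator B (fun _ => (1:ℝ)) (X ω)| ∂μ)
          ≤ ∫ _, (1:ℝ) ∂μ := by
            refine integral_mono hg_int (integrable_const 1) fun ω => ?_
            rw [habs]
            split
            · norm_num
            · exact hs_le1 _
        _ = 1 := by simp
    refine hL1.trans ?_
    have e1 : lam ^ β ≤ lam ^ (n:ℕ) := by
      rw [← Real.rpow_natCast lam n]
      exact Real.rpow_le_rpow_of_exponent_le hlam (Nat.le_ceil β)
    have e2 : (lam * t₀) ^ n / (Nat.factorial n : ℝ) ≤ Real.exp (lam * t₀) := by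
      calc (lam * t₀) ^ n / (Nat.factorial n : ℝ)
          ≤ ∑ i ∈ Finset.range (n + 1), (lam * t₀) ^ i / (Nat.factorial i : ℝ) :=
            Finset.single_le_sum (f := fun i => (lam * t₀) ^ i / (Nat.factorial i : ℝ))
              (fun i _ => by positivity) (Finset.self_mem_range_succ n)
        _ ≤ Real.exp (lam * t₀) := Real.sum_le_exp_of_nonneg (by positivity) _
    have e3 : Real.exp (lam * t₀) ≤ Real.exp ((d:ℝ) * c₀) := by
      apply Real.exp_le_exp.mpr
      have : lam * t₀ < lam * εd := mul_lt_mul_of_pos_left hcase hlam0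
      linarith [hdc]
    have e4 : lam ^ β * t₀ ^ n ≤ Real.exp ((d:ℝ) * c₀) * (Nat.factorial n : ℝ) := by
      have hmp : (lam * t₀) ^ n = lam ^ (n:ℕ) * t₀ ^ n := mul_pow _ _ _
      have h5 : (lam * t₀) ^ n ≤ Real.exp ((d:ℝ) * c₀) * (Nat.factorial n : ℝ) := by
        rw [div_le_iff₀ hfact] at e2
        calc (lam * t₀) ^ n ≤ Real.exp (lam * t₀) * (Nat.factorial n : ℝ) := e2
          _ ≤ Real.exp ((d:ℝ) * c₀) * (Nat.factorial n : ℝ) := by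
              apply mul_le_mul_of_nonneg_right e3 hfact.le
      have h6 : lam ^ β * t₀ ^ n ≤ lam ^ (n:ℕ) * t₀ ^ n :=
        mul_le_mul_of_nonneg_right e1 ht₀n.le
      calc lam ^ β * t₀ ^ n ≤ lam ^ (n:ℕ) * t₀ ^ n := h6
        _ = (lam * t₀) ^ n := hmp.symm
        _ ≤ Real.exp ((d:ℝ) * c₀) * (Nat.factorial n : ℝ) := h5
    have e5 : (1:ℝ) ≤ Real.exp ((d:ℝ) * c₀) * ((Nat.factorial n : ℝ) / t₀ ^ n)
        * lam ^ (-β) := by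
      have h6 : (1:ℝ) = lam ^ β * lam ^ (-β) := by
        rw [← Real.rpow_add hlam0]; simp
      rw [h6]
      apply mul_le_mul_of_nonneg_right _ hlamβ.le
      have h7 : Real.exp ((d:ℝ) * c₀) * ((Nat.factorial n : ℝ) / t₀ ^ n)
          = Real.exp ((d:ℝ) * c₀) * (Nat.factorial n : ℝ) / t₀ ^ n := by ring
      rw [h7, le_div_iff₀ ht₀n]
      exact e4
    refine e5.trans ?_
    have h8 : 0 ≤ C * ((d:ℝ) * c₀) ^ β := by positivity
    have h9 : 0 ≤ Real.exp ((d:ℝ) * c₀) * (C * Real.Gamma (β + 1)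
        + t₀ ^ (-β) * Real.Gamma (β + 1)) := by positivity
    nlinarith [hlamβ.le, mul_le_mul_of_nonneg_right (le_refl (0:ℝ)) hlamβ.le,
      mul_nonneg h9 hlamβ.le, mul_nonneg h8 hlamβ.le]
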